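/- The number of 132-avoiding permutations of {1,...,n} equals the Catalan number C_n = (2n choose n)/(n+1). -/
import Mathlib

open Finset Equiv

def Av (n : ℕ) : Finset (Equiv.Perm (Fin n)) :=
  Finset.univ.filter fun p => ∀ i j k : Fin n, i < j → j < k → ¬(p i < p k ∧ p k < p j)

lemma mem_Av {n : ℕ} {p : Equiv.Perm (Fin n)} :
    p ∈ Av n ↔ ∀ i j k : Fin n, i < j → j < k → ¬(p i < p k ∧ p k < p j) := by
  simp [Av]

def glueFun (a b : ℕ) (q : Equiv.Perm (Fin a)) (r : Equiv.Perm (Fin b)) :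
    Fin (a + b + 1) → Fin (a + b + 1) := fun i =>
  if h : (i : ℕ) < a then ⟨b + (q ⟨i, h⟩ : ℕ), by have := (q ⟨i, h⟩).isLt; omega⟩
  else if h2 : (i : ℕ) = a then ⟨a + b, by omega⟩
  else ⟨(r ⟨(i : ℕ) - a - 1, by have := i.isLt; omega⟩ : ℕ), by
    have := (r ⟨(i : ℕ) - a - 1, by have := i.isLt; omega⟩).isLt; omega⟩

lemma glueFun_val_lt (a b : ℕ) (q : Equiv.Perm (Fin a)) (r : Equiv.Perm (Fin b))
    {x : Fin (a + b + 1)} (h : (x : ℕ) < a) :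
    ((glueFun a b q r x : Fin (a + b + 1)) : ℕ) = b + (q ⟨x, h⟩ : ℕ) := by
  unfold glueFun; rw [dif_pos h]

lemma glueFun_val_eq (a b : ℕ) (q : Equiv.Perm (Fin a)) (r : Equiv.Perm (Fin b))
    {x : Fin (a + b + 1)} (h : (x : ℕ) = a) :
    ((glueFun a b q r x : Fin (a + b + 1)) : ℕ) = a + b := by
  unfold glueFun; rw [dif_neg (by omega), dif_pos h]

lemma glueFun_val_gt (a b : ℕ) (q : Equiv.Perm (Fin a)) (r : Equiv.Perm (Fin b))
    {x : Fin (a + b + 1)} (h : a < (x : ℕ)) :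
    ((glueFun a b q r x : Fin (a + b + 1)) : ℕ) =
      (r ⟨(x : ℕ) - a - 1, by have := x.isLt; omega⟩ : ℕ) := by
  unfold glueFun; rw [dif_neg (by omega), dif_neg (by omega)]

lemma glueFun_injective (a b : ℕ) (q : Equiv.Perm (Fin a)) (r : Equiv.Perm (Fin b)) :
    Function.Injective (glueFun a b q r) := by
  intro i j hij
  have hv := congrArg Fin.val hij
  have hi := i.isLt; have hj := j.isLt
  rcases Nat.lt_trichotomy (i : ℕ) a with h1 | h1 | h1 <;>
    rcases Nat.lt_trichotomy (j : ℕ) a with h2 | h2 | h2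
  · rw [glueFun_val_lt a b q r h1, glueFun_val_lt a b q r h2] at hv
    have := q.injective (Fin.ext (by omega : ((q ⟨i, h1⟩ : Fin a) : ℕ) = (q ⟨j, h2⟩ : ℕ)))
    have := congrArg Fin.val this
    exact Fin.ext this
  · rw [glueFun_val_lt a b q r h1, glueFun_val_eq a b q r h2] at hv
    have := (q ⟨i, h1⟩).isLt; omega
  · rw [glueFun_val_lt a b q r h1, glueFun_val_gt a b q r h2] at hv
    have := (q ⟨i, h1⟩).isLt
    have := (r ⟨(j : ℕ) - a - 1, by omega⟩).isLt; omega
  · rw [glueFun_val_eq a b q r h1, glueFun_val_lt a b q r h2] at hv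
    have := (q ⟨j, h2⟩).isLt; omega
  · exact Fin.ext (by omega)
  · rw [glueFun_val_eq a b q r h1, glueFun_val_gt a b q r h2] at hv
    have := (r ⟨(j : ℕ) - a - 1, by omega⟩).isLt; omega
  · rw [glueFun_val_gt a b q r h1, glueFun_val_lt a b q r h2] at hv
    have := (q ⟨j, h2⟩).isLt
    have := (r ⟨(i : ℕ) - a - 1, by omega⟩).isLt; omega
  · rw [glueFun_val_gt a b q r h1, glueFun_val_eq a b q r h2] at hv
    have := (r ⟨(i : ℕ) - a - 1, by omega⟩).isLt; omega
  · rw [glueFun_val_gt a b q r h1, glueFun_val_gt a b q r h2] at hv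
    have := r.injective (Fin.ext hv)
    have := congrArg Fin.val this
    simp only at this
    exact Fin.ext (by omega)

noncomputable def glue (a b : ℕ) (q : Equiv.Perm (Fin a)) (r : Equiv.Perm (Fin b)) :
    Equiv.Perm (Fin (a + b + 1)) :=
  Equiv.ofBijective _ (Finite.injective_iff_bijective.mp (glueFun_injective a b q r))

lemma glue_val_lt (a b : ℕ) (q : Equiv.Perm (Fin a)) (r : Equiv.Perm (Fin b))
    {x : Fin (a + b + 1)} (h : (x : ℕ) < a) :
    ((glue a b q r x : Fin (a + b + 1)) : ℕ) = b + (q ⟨x, h⟩ : ℕ) :=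
  glueFun_val_lt a b q r h

lemma glue_val_eq (a b : ℕ) (q : Equiv.Perm (Fin a)) (r : Equiv.Perm (Fin b))
    {x : Fin (a + b + 1)} (h : (x : ℕ) = a) :
    ((glue a b q r x : Fin (a + b + 1)) : ℕ) = a + b :=
  glueFun_val_eq a b q r h

lemma glue_val_gt (a b : ℕ) (q : Equiv.Perm (Fin a)) (r : Equiv.Perm (Fin b))
    {x : Fin (a + b + 1)} (h : a < (x : ℕ)) :
    ((glue a b q r x : Fin (a + b + 1)) : ℕ) =
      (r ⟨(x : ℕ) - a - 1, by have := x.isLt; omega⟩ : ℕ) :=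
  glueFun_val_gt a b q r h
lemma glue_mem_Av {a b : ℕ} {q : Equiv.Perm (Fin a)} {r : Equiv.Perm (Fin b)}
    (hq : q ∈ Av a) (hr : r ∈ Av b) : glue a b q r ∈ Av (a + b + 1) := by
  rw [mem_Av] at hq hr ⊢
  rintro i j k hij hjk ⟨hp1, hp2⟩
  rw [Fin.lt_def] at hij hjk hp1 hp2
  have hk := k.isLt
  have hgj := (glue a b q r j).isLt
  rcases Nat.lt_trichotomy (k : ℕ) a with h1 | h1 | h1
  · -- all three in left block
    have hja : (j : ℕ) < a := by omega
    have hia : (i : ℕ) < a := by omega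
    rw [glue_val_lt a b q r hia, glue_val_lt a b q r h1] at hp1
    rw [glue_val_lt a b q r h1, glue_val_lt a b q r hja] at hp2
    exact hq ⟨i, hia⟩ ⟨j, hja⟩ ⟨k, h1⟩ (by rw [Fin.lt_def]; exact hij)
      (by rw [Fin.lt_def]; exact hjk)
      ⟨by rw [Fin.lt_def]; omega, by rw [Fin.lt_def]; omega⟩
  · rw [glue_val_eq a b q r h1] at hp2; omega
  · -- k in right block
    have hrk := (r ⟨(k : ℕ) - a - 1, by omega⟩).isLt
    rw [glue_val_gt a b q r h1] at hp1 hp2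
    rcases Nat.lt_trichotomy (j : ℕ) a with h2 | h2 | h2
    · have hia : (i : ℕ) < a := by omega
      rw [glue_val_lt a b q r hia] at hp1; omega
    · have hia : (i : ℕ) < a := by omega
      rw [glue_val_lt a b q r hia] at hp1; omega
    · rcases Nat.lt_trichotomy (i : ℕ) a with h3 | h3 | h3
      · rw [glue_val_lt a b q r h3] at hp1; omega
      · rw [glue_val_eq a b q r h3] at hp1; omega
      · rw [glue_val_gt a b q r h3] at hp1
        rw [glue_val_gt a b q r h2] at hp2
        exact hr ⟨(i : ℕ) - a - 1, by omega⟩ ⟨(j : ℕ) - a - 1, by omega⟩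
          ⟨(k : ℕ) - a - 1, by omega⟩
          (by rw [Fin.lt_def]; simp only; omega) (by rw [Fin.lt_def]; simp only; omega)
          ⟨by rw [Fin.lt_def]; exact hp1, by rw [Fin.lt_def]; exact hp2⟩
lemma exists_glue {a b : ℕ} {p : Equiv.Perm (Fin (a + b + 1))}
    (hp : p ∈ Av (a + b + 1)) (hm : p ⟨a, by omega⟩ = ⟨a + b, by omega⟩) :
    ∃ q ∈ Av a, ∃ r ∈ Av b, glue a b q r = p := by
  rw [mem_Av] at hp
  -- values at non-max positions are < a + b
  have htop : ∀ k : Fin (a + b + 1), (k : ℕ) ≠ a → (p k : ℕ) < a + b := by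
    intro k hk
    have h1 := (p k).isLt
    rcases Nat.lt_or_ge ((p k : Fin (a+b+1)) : ℕ) (a + b) with h | h
    · exact h
    · exfalso
      have : p k = ⟨a + b, by omega⟩ := Fin.ext (by simp only [Fin.val_mk]; omega)
      rw [← hm] at this
      have := p.injective this
      exact hk (by rw [this])
  -- cross comparison
  have hcross : ∀ i k : Fin (a + b + 1), (i : ℕ) < a → a < (k : ℕ) → p k < p i := by
    intro i k hi hk
    have h1 := hp i ⟨a, by omega⟩ k (by rw [Fin.lt_def]; exact hi) (by rw [Fin.lt_def]; exact hk)
    have hk_top : (p k : ℕ) < a + b := htop k (by omega)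
    have hik : p i ≠ p k := fun h => by
      have := p.injective h
      have := congrArg Fin.val this
      omega
    rw [Fin.lt_def]
    have h2 : ¬ ((p i : ℕ) < (p k : ℕ)) := by
      intro hlt
      exact h1 ⟨Fin.lt_def.mpr hlt, by rw [Fin.lt_def, hm]; exact hk_top⟩
    have : (p i : ℕ) ≠ (p k : ℕ) := fun h => hik (Fin.ext h)
    omega
  -- right block values are < b
  have hlow : ∀ k : Fin (a + b + 1), a < (k : ℕ) → (p k : ℕ) < b := by
    intro k hk
    have hsub : (Finset.Iic (⟨a, by omega⟩ : Fin (a + b + 1))).image p ⊆ Finset.Ioi (p k) := by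
      intro x hx
      simp only [Finset.mem_image, Finset.mem_Iic] at hx
      obtain ⟨i, hi, rfl⟩ := hx
      rw [Finset.mem_Ioi]
      rw [Fin.le_def] at hi
      simp only [Fin.val_mk] at hi
      rcases Nat.lt_or_ge (i : ℕ) a with h | h
      · exact hcross i k h hk
      · have hia : (i : ℕ) = a := by omega
        have : i = ⟨a, by omega⟩ := Fin.ext hia
        rw [this, hm, Fin.lt_def]
        simp only [Fin.val_mk]
        exact htop k (by omega)
    have h1 := Finset.card_le_card hsub
    rw [Finset.card_image_of_injective _ p.injective, Fin.card_Iic, Fin.card_Ioi] at h1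
    simp only [Fin.val_mk] at h1
    have := (p k).isLt
    omega
  -- left block values are ≥ b
  have hhigh : ∀ i : Fin (a + b + 1), (i : ℕ) < a → b ≤ (p i : ℕ) := by
    intro i hi
    have hsub : (Finset.Ioi (⟨a, by omega⟩ : Fin (a + b + 1))).image p ⊆ Finset.Iio (p i) := by
      intro x hx
      simp only [Finset.mem_image, Finset.mem_Ioi] at hx
      obtain ⟨k, hk, rfl⟩ := hx
      rw [Finset.mem_Iio]
      rw [Fin.lt_def] at hk
      exact hcross i k hi hk
    have h1 := Finset.card_le_card hsub
    rw [Finset.card_image_of_injective _ p.injective, Fin.card_Ioi, Fin.card_Iio] at h1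
    simp only [Fin.val_mk] at h1
    omega
  -- build q
  let qf : Fin a → Fin a := fun i =>
    ⟨(p ⟨(i : ℕ), by omega⟩ : ℕ) - b, by
      have h1 : (p ⟨(i : ℕ), by omega⟩ : ℕ) < a + b := htop _ (by simp; omega)
      have h2 : b ≤ (p ⟨(i : ℕ), by omega⟩ : ℕ) := hhigh _ i.isLt
      omega⟩
  have qf_inj : Function.Injective qf := by
    intro x y hxy
    have hvx : b ≤ (p ⟨(x : ℕ), by omega⟩ : ℕ) := hhigh _ x.isLt
    have hvy : b ≤ (p ⟨(y : ℕ), by omega⟩ : ℕ) := hhigh _ y.isLt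
    have hv := congrArg Fin.val hxy
    simp only [qf] at hv
    have : (p ⟨(x : ℕ), by omega⟩ : ℕ) = (p ⟨(y : ℕ), by omega⟩ : ℕ) := by omega
    have := p.injective (Fin.ext this)
    have := congrArg Fin.val this
    exact Fin.ext this
  let q : Equiv.Perm (Fin a) := Equiv.ofBijective qf (Finite.injective_iff_bijective.mp qf_inj)
  -- build r
  let rf : Fin b → Fin b := fun k =>
    ⟨(p ⟨a + 1 + (k : ℕ), by have := k.isLt; omega⟩ : ℕ), hlow _ (by simp; omega)⟩
  have rf_inj : Function.Injective rf := by
    intro x y hxy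
    have hv := congrArg Fin.val hxy
    simp only [rf] at hv
    have := p.injective (Fin.ext hv)
    have := congrArg Fin.val this
    simp only at this
    exact Fin.ext (by omega)
  let r : Equiv.Perm (Fin b) := Equiv.ofBijective rf (Finite.injective_iff_bijective.mp rf_inj)
  have hq : q ∈ Av a := by
    rw [mem_Av]
    rintro i j k hij hjk ⟨h1, h2⟩
    rw [Fin.lt_def] at hij hjk h1 h2
    have hqi : ((q i : Fin a) : ℕ) = (p ⟨(i : ℕ), by omega⟩ : ℕ) - b := rfl
    have hqj : ((q j : Fin a) : ℕ) = (p ⟨(j : ℕ), by omega⟩ : ℕ) - b := rfl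
    have hqk : ((q k : Fin a) : ℕ) = (p ⟨(k : ℕ), by omega⟩ : ℕ) - b := rfl
    have hbi : b ≤ (p ⟨(i : ℕ), by omega⟩ : ℕ) := hhigh _ i.isLt
    have hbj : b ≤ (p ⟨(j : ℕ), by omega⟩ : ℕ) := hhigh _ j.isLt
    have hbk : b ≤ (p ⟨(k : ℕ), by omega⟩ : ℕ) := hhigh _ k.isLt
    exact hp ⟨(i : ℕ), by omega⟩ ⟨(j : ℕ), by omega⟩ ⟨(k : ℕ), by omega⟩
      (by rw [Fin.lt_def]; simp only [Fin.val_mk]; omega)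
      (by rw [Fin.lt_def]; simp only [Fin.val_mk]; omega)
      ⟨by rw [Fin.lt_def]; omega, by rw [Fin.lt_def]; omega⟩
  have hr : r ∈ Av b := by
    rw [mem_Av]
    rintro i j k hij hjk ⟨h1, h2⟩
    rw [Fin.lt_def] at hij hjk h1 h2
    have hri : ((r i : Fin b) : ℕ) = (p ⟨a + 1 + (i : ℕ), by have := i.isLt; omega⟩ : ℕ) := rfl
    have hrj : ((r j : Fin b) : ℕ) = (p ⟨a + 1 + (j : ℕ), by have := j.isLt; omega⟩ : ℕ) := rfl
    have hrk : ((r k : Fin b) : ℕ) = (p ⟨a + 1 + (k : ℕ), by have := k.isLt; omega⟩ : ℕ) := rfl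
    exact hp ⟨a + 1 + (i : ℕ), by have := i.isLt; omega⟩
      ⟨a + 1 + (j : ℕ), by have := j.isLt; omega⟩
      ⟨a + 1 + (k : ℕ), by have := k.isLt; omega⟩
      (by rw [Fin.lt_def]; simp only [Fin.val_mk]; omega)
      (by rw [Fin.lt_def]; simp only [Fin.val_mk]; omega)
      ⟨by rw [Fin.lt_def]; omega, by rw [Fin.lt_def]; omega⟩
  refine ⟨q, hq, r, hr, ?_⟩
  apply Equiv.ext
  intro x
  apply Fin.ext
  rcases Nat.lt_trichotomy (x : ℕ) a with h | h | h
  · rw [glue_val_lt a b q r h]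
    have h1 : ((q ⟨(x : ℕ), h⟩ : Fin a) : ℕ) = ((p x : Fin (a + b + 1)) : ℕ) - b := rfl
    have h2 : b ≤ ((p x : Fin (a + b + 1)) : ℕ) := hhigh x h
    omega
  · rw [glue_val_eq a b q r h]
    have : x = ⟨a, by omega⟩ := Fin.ext h
    rw [this, hm]
  · rw [glue_val_gt a b q r h]
    have hx := x.isLt
    have h1 : ((r ⟨(x : ℕ) - a - 1, by omega⟩ : Fin b) : ℕ) =
        (p ⟨a + 1 + ((x : ℕ) - a - 1), by omega⟩ : ℕ) := rfl
    rw [h1]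
    have : (⟨a + 1 + ((x : ℕ) - a - 1), by omega⟩ : Fin (a + b + 1)) = x := Fin.ext (by
      simp only [Fin.val_mk]; omega)
    rw [this]
lemma fiber_card (a b : ℕ) :
    ((Av (a + b + 1)).filter fun p => p ⟨a, by omega⟩ = ⟨a + b, by omega⟩).card =
      (Av a).card * (Av b).card := by
  rw [← Finset.card_product]
  refine (Finset.card_bij (fun qr _ => glue a b qr.1 qr.2) ?_ ?_ ?_).symm
  · rintro ⟨q, r⟩ hqr
    rw [Finset.mem_product] at hqr
    rw [Finset.mem_filter]
    refine ⟨glue_mem_Av hqr.1 hqr.2, ?_⟩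
    apply Fin.ext
    rw [glue_val_eq a b q r (by simp)]
  · rintro ⟨q1, r1⟩ h1 ⟨q2, r2⟩ h2 hg
    simp only at hg
    have hq : q1 = q2 := by
      apply Equiv.ext
      intro i
      have hx : glue a b q1 r1 ⟨(i : ℕ), by have := i.isLt; omega⟩ =
          glue a b q2 r2 ⟨(i : ℕ), by have := i.isLt; omega⟩ := by rw [hg]
      have hv := congrArg Fin.val hx
      rw [glue_val_lt a b q1 r1 i.isLt, glue_val_lt a b q2 r2 i.isLt] at hv
      have hvv : b + ((q1 i : Fin a) : ℕ) = b + ((q2 i : Fin a) : ℕ) := hv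
      exact Fin.ext (by omega)
    have hr : r1 = r2 := by
      apply Equiv.ext
      intro k
      have hb : a + 1 + (k : ℕ) - a - 1 < b := by have := k.isLt; omega
      have hx : glue a b q1 r1 ⟨a + 1 + (k : ℕ), by have := k.isLt; omega⟩ =
          glue a b q2 r2 ⟨a + 1 + (k : ℕ), by have := k.isLt; omega⟩ := by rw [hg]
      have hv := congrArg Fin.val hx
      rw [glue_val_gt a b q1 r1 (by simp only [Fin.val_mk]; omega),
        glue_val_gt a b q2 r2 (by simp only [Fin.val_mk]; omega)] at hv
      have hvv : ((r1 ⟨a + 1 + (k : ℕ) - a - 1, hb⟩ : Fin b) : ℕ) =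
          ((r2 ⟨a + 1 + (k : ℕ) - a - 1, hb⟩ : Fin b) : ℕ) := hv
      have he : (⟨a + 1 + (k : ℕ) - a - 1, hb⟩ : Fin b) = k := Fin.ext (by
        simp only [Fin.val_mk]; omega)
      rw [he] at hvv
      exact Fin.ext hvv
    rw [hq, hr]
  · intro p hp
    rw [Finset.mem_filter] at hp
    obtain ⟨q, hq, r, hr, hglue⟩ := exists_glue hp.1 hp.2
    exact ⟨(q, r), Finset.mem_product.mpr ⟨hq, hr⟩, hglue⟩
lemma fiber_card' (n m : ℕ) (h : m ≤ n) :
    ((Av (n + 1)).filter fun p => p ⟨m, by omega⟩ = ⟨n, by omega⟩).card =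
      (Av m).card * (Av (n - m)).card := by
  obtain ⟨b, rfl⟩ := Nat.exists_eq_add_of_le h
  rw [show m + b - m = b by omega]
  exact fiber_card m b

lemma av_card (n : ℕ) : (Av n).card = catalan n := by
  induction n using Nat.strong_induction_on with
  | _ n ih =>
    match n with
    | 0 =>
      rw [catalan_zero]
      rw [show Av 0 = Finset.univ by
        apply Finset.eq_univ_of_forall
        intro p
        rw [mem_Av]
        intro i
        exact i.elim0]
      simp
    | (m + 1) =>
      rw [Finset.card_eq_sum_card_fiberwise
        (f := fun p : Equiv.Perm (Fin (m + 1)) => p.symm ⟨m, m.lt_succ_self⟩)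
        (t := Finset.univ) (fun _ _ => Finset.mem_univ _), catalan_succ]
      apply Finset.sum_congr rfl
      intro x _
      have hx : (x : ℕ) ≤ m := Fin.is_le x
      have hpred : ∀ p : Equiv.Perm (Fin (m + 1)),
          (p.symm ⟨m, m.lt_succ_self⟩ = x) ↔ (p ⟨(x : ℕ), by omega⟩ = ⟨m, by omega⟩) := by
        intro p
        rw [Equiv.symm_apply_eq, eq_comm]
      rw [Finset.filter_congr (fun p _ => hpred p), fiber_card' m x hx,
        ih x (by omega), ih (m - x) (by omega)]

/-- The number of 132-avoiding permutations of `{1,...,n}` is the `n`-th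
Catalan number. -/
theorem card_avoid132_eq_catalan (n : ℕ) :
    (Finset.univ.filter fun p : Equiv.Perm (Fin n) =>
        ∀ i j k : Fin n, i < j → j < k → ¬(p i < p k ∧ p k < p j)).card =
      catalan n := by
  exact av_card n
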